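/- Let n = 3 and let A be a symmetric positive definite 3×3 real matrix with entries A_{ij}, and set V(x) = xᵀAx. Then the choice model q(μ) = argmax_{x ∈ Δ₂} { μᵀx − V(x) } is substitutable (for all i ≠ j, all μ ∈ ℝ³, and all t > 0, q_j(μ + t·e_i) ≤ q_j(μ)) if and only if the three inequalities A₁₂ + A₃₃ ≥ A₁₃ + A₂₃, A₁₃ + A₂₂ ≥ A₁₂ + A₂₃, and A₂₃ + A₁₁ ≥ A₁₂ + A₁₃ all hold. -/

import Mathlib

open scoped BigOperators
open MeasureTheory

noncomputable section

/-- The simplex Δ_{n-1} in ℝⁿ. -/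
def choiceSimplex (n : ℕ) : Set (Fin n → ℝ) :=
  {x | (∀ i, 0 ≤ x i) ∧ ∑ i, x i = 1}

/-- A choice welfare function: monotone, translation invariant, convex. -/
def IsCWF {n : ℕ} (w : (Fin n → ℝ) → ℝ) : Prop :=
  (∀ μ₁ μ₂ : Fin n → ℝ, μ₂ ≤ μ₁ → w μ₂ ≤ w μ₁) ∧
  (∀ (μ : Fin n → ℝ) (t : ℝ), w (μ + fun _ => t) = w μ + t) ∧
  ConvexOn ℝ Set.univ w

/-- The quadratic form V(x) = xᵀ A x. -/
def Vquad {n : ℕ} (A : Matrix (Fin n) (Fin n) ℝ) (x : Fin n → ℝ) : ℝ :=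
  ∑ i, ∑ j, x i * A i j * x j

section Aux
open Matrix

variable (A : Matrix (Fin 3) (Fin 3) ℝ)

lemma Vquad_eq (x : Fin 3 → ℝ) : Vquad A x = x ⬝ᵥ (A *ᵥ x) := by
  simp [Vquad, dotProduct, Matrix.mulVec, Finset.mul_sum, mul_assoc]

lemma B_comm (hsymm : A.IsSymm) (u v : Fin 3 → ℝ) : u ⬝ᵥ (A *ᵥ v) = v ⬝ᵥ (A *ᵥ u) := by
  rw [Matrix.dotProduct_mulVec, ← hsymm, Matrix.vecMul_transpose, dotProduct_comm, hsymm]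

lemma pd_vec (hpos : A.PosDef) (w : Fin 3 → ℝ) (hw : w ≠ 0) : 0 < w ⬝ᵥ (A *ᵥ w) := by
  have := hpos.dotProduct_mulVec_pos hw
  simpa using this

lemma Vpos (hpos : A.PosDef) (y : Fin 3 → ℝ) (hy : y ≠ 0) : 0 < Vquad A y := by
  rw [Vquad_eq]
  exact pd_vec A hpos y hy

lemma exists_q :
    ∃ q : (Fin 3 → ℝ) → Fin 3 → ℝ, ∀ μ : Fin 3 → ℝ, q μ ∈ choiceSimplex 3 ∧
      ∀ x ∈ choiceSimplex 3,
        ∑ i, μ i * x i - Vquad A x ≤ ∑ i, μ i * q μ i - Vquad A (q μ) := by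
  have hcomp : IsCompact (choiceSimplex 3) := isCompact_stdSimplex ℝ (Fin 3)
  have hne : (choiceSimplex 3).Nonempty := by
    refine ⟨fun _ => 1/3, fun i => by norm_num, ?_⟩
    norm_num [Fin.sum_univ_three]
  have H : ∀ μ : Fin 3 → ℝ, ∃ x, x ∈ choiceSimplex 3 ∧
      ∀ z ∈ choiceSimplex 3, (∑ i, μ i * z i - Vquad A z) ≤ ∑ i, μ i * x i - Vquad A x := by
    intro μ
    have hc : Continuous fun x : Fin 3 → ℝ => ∑ i, μ i * x i - Vquad A x := by
      unfold Vquad; fun_prop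
    obtain ⟨x, hx, hmax⟩ := hcomp.exists_isMaxOn hne hc.continuousOn
    exact ⟨x, hx, fun z hz => hmax hz⟩
  choose q h1 h2 using H
  exact ⟨q, fun μ => ⟨h1 μ, h2 μ⟩⟩

lemma eps_le {a C s₀ : ℝ} (hs₀ : 0 < s₀) (h : ∀ s, 0 < s → s ≤ s₀ → a ≤ s * C) : a ≤ 0 := by
  rcases le_or_gt C 0 with hC | hC
  · have := h s₀ hs₀ le_rfl
    nlinarith
  · by_contra ha
    push_neg at ha
    have hs : 0 < min s₀ (a / (2 * C)) := lt_min hs₀ (by positivity)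
    have h2 := h _ hs (min_le_left _ _)
    have h3 : min s₀ (a / (2 * C)) * C ≤ (a / (2 * C)) * C :=
      mul_le_mul_of_nonneg_right (min_le_right _ _) hC.le
    have h4 : (a / (2 * C)) * C = a / 2 := by field_simp
    linarith

lemma cover : ∀ (i j k n : Fin 3), i ≠ j → i ≠ k → j ≠ k → n = i ∨ n = j ∨ n = k := by decide

lemma sum3 (i j k : Fin 3) (hij : i ≠ j) (hik : i ≠ k) (hjk : j ≠ k) (f : Fin 3 → ℝ) :
    ∑ m, f m = f i + f j + f k := by
  have huniv : (Finset.univ : Finset (Fin 3)) = {i, j, k} := by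
    apply Finset.eq_of_subset_of_card_le
    · intro n _
      simp only [Finset.mem_insert, Finset.mem_singleton]
      exact cover i j k n hij hik hjk
    · rw [Finset.card_insert_of_notMem (by simp [hij, hik]),
        Finset.card_insert_of_notMem (by simp [hjk]), Finset.card_singleton]
      simp
  rw [huniv, Finset.sum_insert (by simp [hij, hik]), Finset.sum_insert (by simp [hjk]),
    Finset.sum_singleton, add_assoc]

lemma expand_obj (hsymm : A.IsSymm) (ν x v : Fin 3 → ℝ) (s : ℝ) :
    (∑ i, ν i * (x + s • v) i - Vquad A (x + s • v)) =
      (∑ i, ν i * x i - Vquad A x) + s * (ν ⬝ᵥ v) - 2 * s * (x ⬝ᵥ (A *ᵥ v))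
        - s ^ 2 * (v ⬝ᵥ (A *ᵥ v)) := by
  have h1 : (∑ i, ν i * (x + s • v) i) = ν ⬝ᵥ x + s * (ν ⬝ᵥ v) := by
    simp [dotProduct, Finset.mul_sum, Finset.sum_add_distrib]
    ring_nf
    rw [Finset.sum_add_distrib]
    congr 1 <;> apply Finset.sum_congr rfl <;> intros <;> ring
  have h2 : Vquad A (x + s • v) = Vquad A x + 2 * s * (x ⬝ᵥ (A *ᵥ v)) + s ^ 2 * (v ⬝ᵥ (A *ᵥ v)) := by
    rw [Vquad_eq, Vquad_eq]
    have hc : v ⬝ᵥ (A *ᵥ x) = x ⬝ᵥ (A *ᵥ v) := B_comm A hsymm v x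
    simp [Matrix.mulVec_add, Matrix.mulVec_smul, dotProduct_add, add_dotProduct,
      dotProduct_smul, smul_dotProduct, smul_eq_mul, hc]
    ring
  rw [h1, h2]
  have : (∑ i, ν i * x i) = ν ⬝ᵥ x := rfl
  rw [this]; ring

/-- feasibility of the swap perturbation -/
lemma swap_mem {x : Fin 3 → ℝ} (hx : x ∈ choiceSimplex 3) {p r : Fin 3} (hpr : p ≠ r)
    {s : ℝ} (hs : 0 < s) (hsr : s ≤ x r) :
    x + s • ((Pi.single p 1 : Fin 3 → ℝ) - Pi.single r 1) ∈ choiceSimplex 3 := by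
  obtain ⟨hx1, hx2⟩ := hx
  constructor
  · intro n
    simp only [Pi.add_apply, Pi.smul_apply, Pi.sub_apply, smul_eq_mul, Pi.single_apply]
    rcases eq_or_ne n p with rfl | hnp
    · rw [if_pos rfl, if_neg hpr]
      nlinarith [hx1 n]
    · rw [if_neg hnp]
      rcases eq_or_ne n r with rfl | hnr
      · rw [if_pos rfl]
        nlinarith
      · rw [if_neg hnr]
        nlinarith [hx1 n]
  · simp only [Pi.add_apply, Pi.smul_apply, Pi.sub_apply, smul_eq_mul, Finset.sum_add_distrib,
      hx2, mul_sub, Finset.sum_sub_distrib, ← Finset.mul_sum, Finset.sum_pi_single']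
    simp

/-- the key comparative-statics inequality -/
lemma cross_le (hsymm : A.IsSymm) {μ : Fin 3 → ℝ} {t : ℝ} (ht : 0 ≤ t) {i : Fin 3}
    {x x' : Fin 3 → ℝ} (hx : x ∈ choiceSimplex 3) (hx' : x' ∈ choiceSimplex 3)
    (hoptx : ∀ z ∈ choiceSimplex 3, ∑ m, μ m * z m - Vquad A z ≤ ∑ m, μ m * x m - Vquad A x)
    (hoptx' : ∀ z ∈ choiceSimplex 3,
      ∑ m, (μ + t • (Pi.single i 1 : Fin 3 → ℝ)) m * z m - Vquad A z ≤
      ∑ m, (μ + t • (Pi.single i 1 : Fin 3 → ℝ)) m * x' m - Vquad A x')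
    {j m : Fin 3} (hjm : j ≠ m) (hij : i ≠ j) (hxm : 0 < x m) (hx'j : 0 < x' j) :
    (x' - x) ⬝ᵥ (A *ᵥ ((Pi.single j 1 : Fin 3 → ℝ) - Pi.single m 1)) ≤ 0 := by
  set v : Fin 3 → ℝ := (Pi.single j 1 : Fin 3 → ℝ) - Pi.single m 1 with hv
  set ν' : Fin 3 → ℝ := μ + t • (Pi.single i 1 : Fin 3 → ℝ) with hν'
  have hs₀ : 0 < min (x m) (x' j) := lt_min hxm hx'j
  apply eps_le (C := v ⬝ᵥ (A *ᵥ v)) hs₀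
  intro s hs hss
  have hy : x + s • v ∈ choiceSimplex 3 :=
    swap_mem hx hjm hs (le_trans hss (min_le_left _ _))
  have h1 := hoptx _ hy
  rw [expand_obj A hsymm] at h1
  have hy' : x' + s • (-v) ∈ choiceSimplex 3 := by
    rw [hv, neg_sub]
    exact swap_mem hx' hjm.symm hs (le_trans hss (min_le_right _ _))
  have h2 := hoptx' _ hy'
  rw [expand_obj A hsymm] at h2
  have hd1 : ν' ⬝ᵥ v = μ ⬝ᵥ v + t * ((Pi.single i 1 : Fin 3 → ℝ) ⬝ᵥ v) := by
    simp [hν', add_dotProduct, smul_dotProduct]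
  have hd2 : t * ((Pi.single i 1 : Fin 3 → ℝ) ⬝ᵥ v) ≤ 0 := by
    have hvv : (Pi.single i 1 : Fin 3 → ℝ) ⬝ᵥ v =
        (if j = i then (1:ℝ) else 0) - (if m = i then 1 else 0) := by
      simp [hv, dotProduct_sub, single_dotProduct, Pi.single_apply]
    rw [hvv]
    have hji : ¬ (j = i) := fun h => hij h.symm
    rcases eq_or_ne m i with rfl | hmi
    · simp [hji]
      positivity
    · simp [hji, hmi]
  have hsub : (x' - x) ⬝ᵥ (A *ᵥ v) = x' ⬝ᵥ (A *ᵥ v) - x ⬝ᵥ (A *ᵥ v) := by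
    simp [sub_dotProduct]
  have hneg : x' ⬝ᵥ (A *ᵥ (-v)) = -(x' ⬝ᵥ (A *ᵥ v)) := by simp [Matrix.mulVec_neg]
  have hneg2 : (-v) ⬝ᵥ (A *ᵥ (-v)) = v ⬝ᵥ (A *ᵥ v) := by simp [Matrix.mulVec_neg]
  have hneg3 : ν' ⬝ᵥ (-v) = -(ν' ⬝ᵥ v) := by simp
  rw [hneg, hneg2, hneg3] at h2
  rw [hsub]
  have key : s * (x' ⬝ᵥ (A *ᵥ v) - x ⬝ᵥ (A *ᵥ v)) ≤ s * (s * (v ⬝ᵥ (A *ᵥ v))) := by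
    nlinarith [h1, h2, hd1, hd2]
  have := (mul_le_mul_iff_right₀ hs).mp key
  linarith

lemma scal3 (i j k : Fin 3) (hij : i ≠ j) (hik : i ≠ k) (hjk : j ≠ k) (w : Fin 3 → ℝ)
    (p r : Fin 3) :
    w ⬝ᵥ (A *ᵥ ((Pi.single p 1 : Fin 3 → ℝ) - Pi.single r 1)) =
      w i * (A i p - A i r) + w j * (A j p - A j r) + w k * (A k p - A k r) := by
  have hv : (A *ᵥ ((Pi.single p 1 : Fin 3 → ℝ) - Pi.single r 1)) = fun m => A m p - A m r := by
    funext m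
    simp [Matrix.mulVec_sub, Matrix.mulVec_single]
  rw [hv]
  exact sum3 i j k hij hik hjk _

lemma quad3 (i j k : Fin 3) (hij : i ≠ j) (hik : i ≠ k) (hjk : j ≠ k) (w : Fin 3 → ℝ) :
    w ⬝ᵥ (A *ᵥ w) =
      w i * (A i i * w i + A i j * w j + A i k * w k) +
      w j * (A j i * w i + A j j * w j + A j k * w k) +
      w k * (A k i * w i + A k j * w j + A k k * w k) := by
  have hm : ∀ m, (A *ᵥ w) m = A m i * w i + A m j * w j + A m k * w k := by
    intro m
    exact sum3 i j k hij hik hjk (fun l => A m l * w l)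
  have h0 : w ⬝ᵥ (A *ᵥ w) = ∑ m, w m * (A *ᵥ w) m := rfl
  rw [h0, sum3 i j k hij hik hjk (fun m => w m * (A *ᵥ w) m), hm i, hm j, hm k]

set_option maxHeartbeats 2000000 in
lemma back_core (hsymm : A.IsSymm) (hpos : A.PosDef) {i j k : Fin 3}
    (hij : i ≠ j) (hik : i ≠ k) (hjk : j ≠ k)
    (hIi : A i j + A i k ≤ A j k + A i i) (hIk : A i k + A j k ≤ A i j + A k k)
    {μ : Fin 3 → ℝ} {t : ℝ} (ht : 0 ≤ t) {x x' : Fin 3 → ℝ}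
    (hx : x ∈ choiceSimplex 3) (hx' : x' ∈ choiceSimplex 3)
    (hoptx : ∀ z ∈ choiceSimplex 3, ∑ m, μ m * z m - Vquad A z ≤ ∑ m, μ m * x m - Vquad A x)
    (hoptx' : ∀ z ∈ choiceSimplex 3,
      ∑ m, (μ + t • (Pi.single i 1 : Fin 3 → ℝ)) m * z m - Vquad A z ≤
      ∑ m, (μ + t • (Pi.single i 1 : Fin 3 → ℝ)) m * x' m - Vquad A x') :
    x' j ≤ x j := by
  by_contra hcon
  push_neg at hcon
  have hAsy : ∀ p r : Fin 3, A p r = A r p := fun p r => hsymm.apply r p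
  have hxs : x i + x j + x k = 1 := by
    rw [← sum3 i j k hij hik hjk]; exact hx.2
  have hx's : x' i + x' j + x' k = 1 := by
    rw [← sum3 i j k hij hik hjk]; exact hx'.2
  have hdj : 0 < x' j - x j := by linarith
  have hdsum : x' i - x i = -(x' j - x j) - (x' k - x k) := by linarith
  have hwi : (x' - x) i = x' i - x i := by simp
  have hwj : (x' - x) j = x' j - x j := by simp
  have hwk : (x' - x) k = x' k - x k := by simp
  have hs1 : A j i = A i j := hAsy j i
  have hs2 : A k i = A i k := hAsy k i
  have hs3 : A k j = A j k := hAsy k j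
  have hx'j : 0 < x' j := by have := hx.1 j; linarith
  rcases lt_or_ge (x' i - x i) 0 with hdi | hdi
  · have hxi : 0 < x i := by have := hx'.1 i; linarith
    have c1 := cross_le A hsymm ht hx hx' hoptx hoptx' hij.symm hij hxi hx'j
    rw [scal3 A i j k hij hik hjk, hwi, hwj, hwk] at c1
    simp only [hs1, hs2, hs3] at c1
    rw [hdsum] at c1
    rcases lt_or_ge (x' k - x k) 0 with hdk | hdk
    · -- case A : dI < 0, dK < 0
      have hxk : 0 < x k := by have := hx'.1 k; linarith
      have c2 := cross_le A hsymm ht hx hx' hoptx hoptx' hjk hij hxk hx'j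
      rw [scal3 A i j k hij hik hjk, hwi, hwj, hwk] at c2
      simp only [hs1, hs2, hs3] at c2
      rw [hdsum] at c2
      have hne : x' - x ≠ 0 := by
        intro h0
        have := congrFun h0 j
        rw [hwj] at this
        simp at this
        linarith
      have hq := pd_vec A hpos _ hne
      rw [quad3 A i j k hij hik hjk, hwi, hwj, hwk] at hq
      simp only [hs1, hs2, hs3] at hq
      rw [hdsum] at hq
      have hS : (0:ℝ) ≤ (x' j - x j) + (x' k - x k) := by linarith
      have hKn : (0:ℝ) ≤ -(x' k - x k) := by linarith
      nlinarith [c1, c2, hq, hS, hKn]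
    · -- case C : dI < 0, dK ≥ 0
      have hu : 0 < ((Pi.single j 1 : Fin 3 → ℝ) - Pi.single i 1) ⬝ᵥ
          (A *ᵥ ((Pi.single j 1 : Fin 3 → ℝ) - Pi.single i 1)) := by
        apply pd_vec A hpos
        intro h0
        have := congrFun h0 j
        simp [Pi.single_apply, hij.symm] at this
      rw [scal3 A i j k hij hik hjk] at hu
      simp only [Pi.sub_apply, Pi.single_apply] at hu
      simp only [if_true, if_pos rfl, if_neg hij, if_neg hij.symm, if_neg hik.symm,
        if_neg hjk.symm, if_neg hik, if_neg hjk] at hu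
      simp only [hs1, hs2, hs3] at hu
      have hu' : 0 < A j j - 2 * A i j + A i i := by linarith
      have hW : (0:ℝ) ≤ A j k - A i k - A i j + A i i := by linarith
      nlinarith [c1, mul_pos hdj hu', mul_nonneg hdk hW]
  · -- case B : dI ≥ 0, so dK < 0
    have hdk : x' k - x k < 0 := by linarith
    have hxk : 0 < x k := by have := hx'.1 k; linarith
    have c2 := cross_le A hsymm ht hx hx' hoptx hoptx' hjk hij hxk hx'j
    rw [scal3 A i j k hij hik hjk, hwi, hwj, hwk] at c2
    simp only [hs1, hs2, hs3] at c2
    rw [show x' k - x k = -(x' j - x j) - (x' i - x i) by linarith] at c2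
    have hu : 0 < ((Pi.single j 1 : Fin 3 → ℝ) - Pi.single k 1) ⬝ᵥ
        (A *ᵥ ((Pi.single j 1 : Fin 3 → ℝ) - Pi.single k 1)) := by
      apply pd_vec A hpos
      intro h0
      have := congrFun h0 j
      simp [Pi.single_apply, hjk] at this
    rw [scal3 A i j k hij hik hjk] at hu
    simp only [Pi.sub_apply, Pi.single_apply] at hu
    simp only [if_true, if_pos rfl, if_neg hij, if_neg hij.symm, if_neg hik.symm,
      if_neg hjk.symm, if_neg hik, if_neg hjk] at hu
    simp only [hs1, hs2, hs3] at hu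
    have hu' : 0 < A j j - 2 * A j k + A k k := by linarith
    have hW : (0:ℝ) ≤ A i j + A k k - A i k - A j k := by linarith
    clear hoptx hoptx' hx hx' hwi hwj hwk
    nlinarith [c2, mul_pos hdj hu', mul_nonneg hdi hW]

lemma grad_identity (hsymm : A.IsSymm) {x z : Fin 3 → ℝ}
    (hxs : ∑ m, x m = 1) (hzs : ∑ m, z m = 1) (lam : ℝ) :
    (∑ m, (2 * (A *ᵥ x) m + lam) * z m - Vquad A z) + Vquad A (x - z)
      = ∑ m, (2 * (A *ᵥ x) m + lam) * x m - Vquad A x := by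
  have h10 : A 1 0 = A 0 1 := hsymm.apply 0 1
  have h20 : A 2 0 = A 0 2 := hsymm.apply 0 2
  have h21 : A 2 1 = A 1 2 := hsymm.apply 1 2
  rw [Fin.sum_univ_three] at hxs hzs
  simp only [Vquad, Matrix.mulVec, dotProduct, Fin.sum_univ_three, Pi.sub_apply,
    h10, h20, h21]
  linear_combination lam * hzs - lam * hxs

lemma argmax_eq (hsymm : A.IsSymm) (hpos : A.PosDef) {q : (Fin 3 → ℝ) → Fin 3 → ℝ}
    (hq : ∀ μ : Fin 3 → ℝ, q μ ∈ choiceSimplex 3 ∧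
      ∀ x ∈ choiceSimplex 3,
        ∑ i, μ i * x i - Vquad A x ≤ ∑ i, μ i * q μ i - Vquad A (q μ))
    {x : Fin 3 → ℝ} (hx : x ∈ choiceSimplex 3) (lam : ℝ) :
    q (fun m => 2 * (A *ᵥ x) m + lam) = x := by
  set ν : Fin 3 → ℝ := fun m => 2 * (A *ᵥ x) m + lam with hν
  have h1 := (hq ν).2 x hx
  have h2 := grad_identity A hsymm hx.2 ((hq ν).1).2 lam
  have hV : Vquad A (x - q ν) ≤ 0 := by
    simp only [hν] at h1 ⊢
    linarith
  by_contra hne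
  have hsub : x - q ν ≠ 0 := by
    intro h0
    exact hne ((sub_eq_zero.mp h0).symm)
  exact absurd (Vpos A hpos _ hsub) (not_lt.mpr hV)

lemma Qpos (hpos : A.PosDef) :
    0 < (A 1 1 * A 2 2 - A 1 2 * A 2 1 + (A 0 2 * A 2 1 - A 0 1 * A 2 2) + (A 0 1 * A 1 2 - A 0 2 * A 1 1))
      + (A 1 2 * A 2 0 - A 1 0 * A 2 2 + (A 0 0 * A 2 2 - A 0 2 * A 2 0) + (A 0 2 * A 1 0 - A 0 0 * A 1 2))
      + (A 1 0 * A 2 1 - A 1 1 * A 2 0 + (A 0 1 * A 2 0 - A 0 0 * A 2 1) + (A 0 0 * A 1 1 - A 0 1 * A 1 0)) := by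
  set u0 : ℝ := A 1 1 * A 2 2 - A 1 2 * A 2 1 + (A 0 2 * A 2 1 - A 0 1 * A 2 2) + (A 0 1 * A 1 2 - A 0 2 * A 1 1) with hu0
  set u1 : ℝ := A 1 2 * A 2 0 - A 1 0 * A 2 2 + (A 0 0 * A 2 2 - A 0 2 * A 2 0) + (A 0 2 * A 1 0 - A 0 0 * A 1 2) with hu1
  set u2 : ℝ := A 1 0 * A 2 1 - A 1 1 * A 2 0 + (A 0 1 * A 2 0 - A 0 0 * A 2 1) + (A 0 0 * A 1 1 - A 0 1 * A 1 0) with hu2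
  have hdet : 0 < A.det := hpos.det_pos
  have hdet3 := Matrix.det_fin_three A
  set U : Fin 3 → ℝ := ![u0, u1, u2] with hU
  have hAU0 : (A *ᵥ U) 0 = A.det := by
    simp only [Matrix.mulVec, dotProduct, Fin.sum_univ_three, hU, hu0, hu1, hu2,
      Matrix.cons_val_zero, Matrix.cons_val_one, Matrix.head_cons, Matrix.cons_val_two,
      Matrix.tail_cons, hdet3]
    ring
  have hAU1 : (A *ᵥ U) 1 = A.det := by
    simp only [Matrix.mulVec, dotProduct, Fin.sum_univ_three, hU, hu0, hu1, hu2,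
      Matrix.cons_val_zero, Matrix.cons_val_one, Matrix.head_cons, Matrix.cons_val_two,
      Matrix.tail_cons, hdet3]
    ring
  have hAU2 : (A *ᵥ U) 2 = A.det := by
    simp only [Matrix.mulVec, dotProduct, Fin.sum_univ_three, hU, hu0, hu1, hu2,
      Matrix.cons_val_zero, Matrix.cons_val_one, Matrix.head_cons, Matrix.cons_val_two,
      Matrix.tail_cons, hdet3]
    ring
  have hAU : ∀ m, (A *ᵥ U) m = A.det := by
    intro m
    fin_cases m
    exacts [hAU0, hAU1, hAU2]
  have hUne : U ≠ 0 := by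
    intro h0
    have h00 := congrFun h0 0
    have h01 := congrFun h0 1
    have h02 := congrFun h0 2
    simp only [hU, Matrix.cons_val_zero, Matrix.cons_val_one, Matrix.head_cons,
      Matrix.cons_val_two, Matrix.tail_cons, Pi.zero_apply] at h00 h01 h02
    have hA0 := hAU 0
    simp only [Matrix.mulVec, dotProduct, Fin.sum_univ_three, hU,
      Matrix.cons_val_zero, Matrix.cons_val_one, Matrix.head_cons, Matrix.cons_val_two,
      Matrix.tail_cons, h00, h01, h02] at hA0
    simp at hA0
    linarith
  have hquad : 0 < U ⬝ᵥ (A *ᵥ U) := pd_vec A hpos U hUne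
  have hexp : U ⬝ᵥ (A *ᵥ U) = A.det * (u0 + u1 + u2) := by
    have h3 : U ⬝ᵥ (A *ᵥ U) = U 0 * (A *ᵥ U) 0 + U 1 * (A *ᵥ U) 1 + U 2 * (A *ᵥ U) 2 :=
      Fin.sum_univ_three _
    rw [h3, hAU 0, hAU 1, hAU 2]
    simp only [hU, Matrix.cons_val_zero, Matrix.cons_val_one, Matrix.head_cons,
      Matrix.cons_val_two, Matrix.tail_cons]
    ring
  by_contra hQ
  push_neg at hQ
  nlinarith [mul_nonneg hdet.le (by linarith : (0:ℝ) ≤ -(u0 + u1 + u2))]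

lemma forward_core (hsymm : A.IsSymm) (hpos : A.PosDef) {q : (Fin 3 → ℝ) → Fin 3 → ℝ}
    (hq : ∀ μ : Fin 3 → ℝ, q μ ∈ choiceSimplex 3 ∧
      ∀ x ∈ choiceSimplex 3,
        ∑ i, μ i * x i - Vquad A x ≤ ∑ i, μ i * q μ i - Vquad A (q μ))
    {p j : Fin 3}
    (hsub : ∀ (μ : Fin 3 → ℝ) (t : ℝ), 0 < t →
      q (μ + t • (Pi.single p 1 : Fin 3 → ℝ)) j ≤ q μ j)
    (d : Fin 3 → ℝ) (Q β : ℝ) (hQ : 0 < Q) (hdsum : d 0 + d 1 + d 2 = 0)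
    (hAd : ∀ m, (A *ᵥ d) m = Q * (Pi.single p 1 : Fin 3 → ℝ) m + β)
    (hdj : 0 < d j) : False := by
  set M : ℝ := |d 0| + |d 1| + |d 2| with hMdef
  have hM : 0 ≤ M := by positivity
  set ε : ℝ := 1 / (3 * (M + 1)) with hε
  have hεpos : 0 < ε := by positivity
  have habs : ∀ m : Fin 3, |d m| ≤ M := by
    have a0 : |d 0| ≤ M := by rw [hMdef]; nlinarith [abs_nonneg (d 1), abs_nonneg (d 2)]
    have a1 : |d 1| ≤ M := by rw [hMdef]; nlinarith [abs_nonneg (d 0), abs_nonneg (d 2)]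
    have a2 : |d 2| ≤ M := by rw [hMdef]; nlinarith [abs_nonneg (d 0), abs_nonneg (d 1)]
    intro m
    fin_cases m
    exacts [a0, a1, a2]
  have hbound : ∀ m : Fin 3, |ε * d m| ≤ 1/3 := by
    intro m
    rw [abs_mul, abs_of_pos hεpos]
    have h1 : ε * |d m| ≤ ε * M := mul_le_mul_of_nonneg_left (habs m) hεpos.le
    have h2 : ε * M ≤ 1/3 := by
      rw [hε]
      rw [div_mul_eq_mul_div, one_mul, div_le_div_iff₀ (by positivity) (by norm_num)]
      nlinarith
    exact h1.trans h2
  set x₀ : Fin 3 → ℝ := fun _ => 1/3 with hx₀def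
  have hx₀ : x₀ ∈ choiceSimplex 3 := by
    constructor
    · intro m; rw [hx₀def]; norm_num
    · rw [Fin.sum_univ_three, hx₀def]; norm_num
  set x' : Fin 3 → ℝ := x₀ + ε • d with hx'def
  have hx' : x' ∈ choiceSimplex 3 := by
    constructor
    · intro m
      have := (abs_le.mp (hbound m)).1
      simp only [hx'def, Pi.add_apply, Pi.smul_apply, smul_eq_mul, hx₀def]
      linarith
    · rw [Fin.sum_univ_three]
      simp only [hx'def, Pi.add_apply, Pi.smul_apply, smul_eq_mul, hx₀def]
      linear_combination ε * hdsum
  set ν : Fin 3 → ℝ := fun m => 2 * (A *ᵥ x₀) m + 0 with hν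
  set t : ℝ := 2 * ε * Q with ht
  have htpos : 0 < t := by rw [ht]; positivity
  have hkey : ν + t • (Pi.single p 1 : Fin 3 → ℝ) = fun m => 2 * (A *ᵥ x') m + (-(2 * ε * β)) := by
    funext m
    have hm : (A *ᵥ x') m = (A *ᵥ x₀) m + ε * (A *ᵥ d) m := by
      rw [hx'def, Matrix.mulVec_add, Matrix.mulVec_smul]
      simp
    simp only [Pi.add_apply, Pi.smul_apply, smul_eq_mul, hν, hm, hAd m, ht]
    ring
  have e1 : q ν = x₀ := argmax_eq A hsymm hpos hq hx₀ 0
  have e2 : q (ν + t • (Pi.single p 1 : Fin 3 → ℝ)) = x' := by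
    rw [hkey]
    exact argmax_eq A hsymm hpos hq hx' (-(2 * ε * β))
  have hmono := hsub ν t htpos
  rw [e1, e2] at hmono
  simp only [hx'def, Pi.add_apply, Pi.smul_apply, smul_eq_mul, hx₀def] at hmono
  nlinarith [mul_pos hεpos hdj]

end Aux

theorem stmt_18 (A : Matrix (Fin 3) (Fin 3) ℝ) (hsymm : A.IsSymm) (hpos : A.PosDef) :
    (∃ q : (Fin 3 → ℝ) → Fin 3 → ℝ, ∀ μ : Fin 3 → ℝ, q μ ∈ choiceSimplex 3 ∧
      ∀ x ∈ choiceSimplex 3,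
        ∑ i, μ i * x i - Vquad A x ≤ ∑ i, μ i * q μ i - Vquad A (q μ)) ∧
    (∀ q : (Fin 3 → ℝ) → Fin 3 → ℝ,
      (∀ μ : Fin 3 → ℝ, q μ ∈ choiceSimplex 3 ∧
        ∀ x ∈ choiceSimplex 3,
          ∑ i, μ i * x i - Vquad A x ≤ ∑ i, μ i * q μ i - Vquad A (q μ)) →
      ((∀ i j : Fin 3, i ≠ j → ∀ (μ : Fin 3 → ℝ) (t : ℝ), 0 < t →
          q (μ + t • (Pi.single i 1 : Fin 3 → ℝ)) j ≤ q μ j) ↔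
        (A 0 2 + A 1 2 ≤ A 0 1 + A 2 2 ∧
         A 0 1 + A 1 2 ≤ A 0 2 + A 1 1 ∧
         A 0 1 + A 0 2 ≤ A 1 2 + A 0 0))) := by
  have h10 : A 1 0 = A 0 1 := hsymm.apply 0 1
  have h20 : A 2 0 = A 0 2 := hsymm.apply 0 2
  have h21 : A 2 1 = A 1 2 := hsymm.apply 1 2
  refine ⟨exists_q A, ?_⟩
  intro q hq
  constructor
  · -- substitutability implies the inequalities
    intro hsub
    have hQs : 0 < A 0 0 * A 1 1 + A 0 0 * A 2 2 + A 1 1 * A 2 2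
        - A 0 1 ^ 2 - A 0 2 ^ 2 - A 1 2 ^ 2
        + 2 * A 0 1 * A 0 2 + 2 * A 0 1 * A 1 2 + 2 * A 0 2 * A 1 2
        - 2 * A 0 0 * A 1 2 - 2 * A 0 1 * A 2 2 - 2 * A 0 2 * A 1 1 := by
      have hh := Qpos A hpos
      rw [h10, h20, h21] at hh
      nlinarith [hh]
    refine ⟨?_, ?_, ?_⟩
    · by_contra hc
      push_neg at hc
      have hsum : (![A 1 1 + A 2 2 - 2 * A 1 2, A 0 2 + A 1 2 - A 0 1 - A 2 2, A 0 1 + A 1 2 - A 0 2 - A 1 1] : Fin 3 → ℝ) 0 + (![A 1 1 + A 2 2 - 2 * A 1 2, A 0 2 + A 1 2 - A 0 1 - A 2 2, A 0 1 + A 1 2 - A 0 2 - A 1 1] : Fin 3 → ℝ) 1 + (![A 1 1 + A 2 2 - 2 * A 1 2, A 0 2 + A 1 2 - A 0 1 - A 2 2, A 0 1 + A 1 2 - A 0 2 - A 1 1] : Fin 3 → ℝ) 2 = 0 := by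
        simp [Matrix.cons_val_zero, Matrix.cons_val_one, Matrix.head_cons]
        ring
      have c0 : (Matrix.mulVec A (![A 1 1 + A 2 2 - 2 * A 1 2, A 0 2 + A 1 2 - A 0 1 - A 2 2, A 0 1 + A 1 2 - A 0 2 - A 1 1] : Fin 3 → ℝ)) 0
          = (A 0 0 * A 1 1 + A 0 0 * A 2 2 + A 1 1 * A 2 2
          - A 0 1 ^ 2 - A 0 2 ^ 2 - A 1 2 ^ 2
          + 2 * A 0 1 * A 0 2 + 2 * A 0 1 * A 1 2 + 2 * A 0 2 * A 1 2
          - 2 * A 0 0 * A 1 2 - 2 * A 0 1 * A 2 2 - 2 * A 0 2 * A 1 1) * (Pi.single (0:Fin 3) 1 : Fin 3 → ℝ) 0 + (A 0 1 * A 2 2 + A 0 2 * A 1 1 + A 1 2 ^ 2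
          - A 0 1 * A 1 2 - A 0 2 * A 1 2 - A 1 1 * A 2 2) := by
        simp [Matrix.mulVec, dotProduct, Fin.sum_univ_three, Pi.single_apply,
          h10, h20, h21]
        ring
      have c1 : (Matrix.mulVec A (![A 1 1 + A 2 2 - 2 * A 1 2, A 0 2 + A 1 2 - A 0 1 - A 2 2, A 0 1 + A 1 2 - A 0 2 - A 1 1] : Fin 3 → ℝ)) 1
          = (A 0 0 * A 1 1 + A 0 0 * A 2 2 + A 1 1 * A 2 2
          - A 0 1 ^ 2 - A 0 2 ^ 2 - A 1 2 ^ 2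
          + 2 * A 0 1 * A 0 2 + 2 * A 0 1 * A 1 2 + 2 * A 0 2 * A 1 2
          - 2 * A 0 0 * A 1 2 - 2 * A 0 1 * A 2 2 - 2 * A 0 2 * A 1 1) * (Pi.single (0:Fin 3) 1 : Fin 3 → ℝ) 1 + (A 0 1 * A 2 2 + A 0 2 * A 1 1 + A 1 2 ^ 2
          - A 0 1 * A 1 2 - A 0 2 * A 1 2 - A 1 1 * A 2 2) := by
        simp [Matrix.mulVec, dotProduct, Fin.sum_univ_three, Pi.single_apply,
          h10, h20, h21]
        ring
      have c2 : (Matrix.mulVec A (![A 1 1 + A 2 2 - 2 * A 1 2, A 0 2 + A 1 2 - A 0 1 - A 2 2, A 0 1 + A 1 2 - A 0 2 - A 1 1] : Fin 3 → ℝ)) 2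
          = (A 0 0 * A 1 1 + A 0 0 * A 2 2 + A 1 1 * A 2 2
          - A 0 1 ^ 2 - A 0 2 ^ 2 - A 1 2 ^ 2
          + 2 * A 0 1 * A 0 2 + 2 * A 0 1 * A 1 2 + 2 * A 0 2 * A 1 2
          - 2 * A 0 0 * A 1 2 - 2 * A 0 1 * A 2 2 - 2 * A 0 2 * A 1 1) * (Pi.single (0:Fin 3) 1 : Fin 3 → ℝ) 2 + (A 0 1 * A 2 2 + A 0 2 * A 1 1 + A 1 2 ^ 2
          - A 0 1 * A 1 2 - A 0 2 * A 1 2 - A 1 1 * A 2 2) := by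
        simp [Matrix.mulVec, dotProduct, Fin.sum_univ_three, Pi.single_apply,
          h10, h20, h21]
        ring
      have hAd : ∀ m, (Matrix.mulVec A (![A 1 1 + A 2 2 - 2 * A 1 2, A 0 2 + A 1 2 - A 0 1 - A 2 2, A 0 1 + A 1 2 - A 0 2 - A 1 1] : Fin 3 → ℝ)) m
          = (A 0 0 * A 1 1 + A 0 0 * A 2 2 + A 1 1 * A 2 2
          - A 0 1 ^ 2 - A 0 2 ^ 2 - A 1 2 ^ 2
          + 2 * A 0 1 * A 0 2 + 2 * A 0 1 * A 1 2 + 2 * A 0 2 * A 1 2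
          - 2 * A 0 0 * A 1 2 - 2 * A 0 1 * A 2 2 - 2 * A 0 2 * A 1 1) * (Pi.single (0:Fin 3) 1 : Fin 3 → ℝ) m + (A 0 1 * A 2 2 + A 0 2 * A 1 1 + A 1 2 ^ 2
          - A 0 1 * A 1 2 - A 0 2 * A 1 2 - A 1 1 * A 2 2) := by
        intro m
        fin_cases m
        exacts [c0, c1, c2]
      have hdj : 0 < (![A 1 1 + A 2 2 - 2 * A 1 2, A 0 2 + A 1 2 - A 0 1 - A 2 2, A 0 1 + A 1 2 - A 0 2 - A 1 1] : Fin 3 → ℝ) 1 := by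
        simp [Matrix.cons_val_zero, Matrix.cons_val_one, Matrix.head_cons]
        linarith
      exact forward_core A hsymm hpos hq (p := 0) (j := 1)
        (fun μ t ht => hsub 0 1 (by decide) μ t ht)
        (![A 1 1 + A 2 2 - 2 * A 1 2, A 0 2 + A 1 2 - A 0 1 - A 2 2, A 0 1 + A 1 2 - A 0 2 - A 1 1]) (A 0 0 * A 1 1 + A 0 0 * A 2 2 + A 1 1 * A 2 2
          - A 0 1 ^ 2 - A 0 2 ^ 2 - A 1 2 ^ 2
          + 2 * A 0 1 * A 0 2 + 2 * A 0 1 * A 1 2 + 2 * A 0 2 * A 1 2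
          - 2 * A 0 0 * A 1 2 - 2 * A 0 1 * A 2 2 - 2 * A 0 2 * A 1 1)
        (A 0 1 * A 2 2 + A 0 2 * A 1 1 + A 1 2 ^ 2
          - A 0 1 * A 1 2 - A 0 2 * A 1 2 - A 1 1 * A 2 2)
        hQs hsum hAd hdj
    · by_contra hc
      push_neg at hc
      have hsum : (![A 1 1 + A 2 2 - 2 * A 1 2, A 0 2 + A 1 2 - A 0 1 - A 2 2, A 0 1 + A 1 2 - A 0 2 - A 1 1] : Fin 3 → ℝ) 0 + (![A 1 1 + A 2 2 - 2 * A 1 2, A 0 2 + A 1 2 - A 0 1 - A 2 2, A 0 1 + A 1 2 - A 0 2 - A 1 1] : Fin 3 → ℝ) 1 + (![A 1 1 + A 2 2 - 2 * A 1 2, A 0 2 + A 1 2 - A 0 1 - A 2 2, A 0 1 + A 1 2 - A 0 2 - A 1 1] : Fin 3 → ℝ) 2 = 0 := by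
        simp [Matrix.cons_val_zero, Matrix.cons_val_one, Matrix.head_cons]
        ring
      have c0 : (Matrix.mulVec A (![A 1 1 + A 2 2 - 2 * A 1 2, A 0 2 + A 1 2 - A 0 1 - A 2 2, A 0 1 + A 1 2 - A 0 2 - A 1 1] : Fin 3 → ℝ)) 0
          = (A 0 0 * A 1 1 + A 0 0 * A 2 2 + A 1 1 * A 2 2
          - A 0 1 ^ 2 - A 0 2 ^ 2 - A 1 2 ^ 2
          + 2 * A 0 1 * A 0 2 + 2 * A 0 1 * A 1 2 + 2 * A 0 2 * A 1 2
          - 2 * A 0 0 * A 1 2 - 2 * A 0 1 * A 2 2 - 2 * A 0 2 * A 1 1) * (Pi.single (0:Fin 3) 1 : Fin 3 → ℝ) 0 + (A 0 1 * A 2 2 + A 0 2 * A 1 1 + A 1 2 ^ 2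
          - A 0 1 * A 1 2 - A 0 2 * A 1 2 - A 1 1 * A 2 2) := by
        simp [Matrix.mulVec, dotProduct, Fin.sum_univ_three, Pi.single_apply,
          h10, h20, h21]
        ring
      have c1 : (Matrix.mulVec A (![A 1 1 + A 2 2 - 2 * A 1 2, A 0 2 + A 1 2 - A 0 1 - A 2 2, A 0 1 + A 1 2 - A 0 2 - A 1 1] : Fin 3 → ℝ)) 1
          = (A 0 0 * A 1 1 + A 0 0 * A 2 2 + A 1 1 * A 2 2
          - A 0 1 ^ 2 - A 0 2 ^ 2 - A 1 2 ^ 2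
          + 2 * A 0 1 * A 0 2 + 2 * A 0 1 * A 1 2 + 2 * A 0 2 * A 1 2
          - 2 * A 0 0 * A 1 2 - 2 * A 0 1 * A 2 2 - 2 * A 0 2 * A 1 1) * (Pi.single (0:Fin 3) 1 : Fin 3 → ℝ) 1 + (A 0 1 * A 2 2 + A 0 2 * A 1 1 + A 1 2 ^ 2
          - A 0 1 * A 1 2 - A 0 2 * A 1 2 - A 1 1 * A 2 2) := by
        simp [Matrix.mulVec, dotProduct, Fin.sum_univ_three, Pi.single_apply,
          h10, h20, h21]
        ring
      have c2 : (Matrix.mulVec A (![A 1 1 + A 2 2 - 2 * A 1 2, A 0 2 + A 1 2 - A 0 1 - A 2 2, A 0 1 + A 1 2 - A 0 2 - A 1 1] : Fin 3 → ℝ)) 2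
          = (A 0 0 * A 1 1 + A 0 0 * A 2 2 + A 1 1 * A 2 2
          - A 0 1 ^ 2 - A 0 2 ^ 2 - A 1 2 ^ 2
          + 2 * A 0 1 * A 0 2 + 2 * A 0 1 * A 1 2 + 2 * A 0 2 * A 1 2
          - 2 * A 0 0 * A 1 2 - 2 * A 0 1 * A 2 2 - 2 * A 0 2 * A 1 1) * (Pi.single (0:Fin 3) 1 : Fin 3 → ℝ) 2 + (A 0 1 * A 2 2 + A 0 2 * A 1 1 + A 1 2 ^ 2
          - A 0 1 * A 1 2 - A 0 2 * A 1 2 - A 1 1 * A 2 2) := by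
        simp [Matrix.mulVec, dotProduct, Fin.sum_univ_three, Pi.single_apply,
          h10, h20, h21]
        ring
      have hAd : ∀ m, (Matrix.mulVec A (![A 1 1 + A 2 2 - 2 * A 1 2, A 0 2 + A 1 2 - A 0 1 - A 2 2, A 0 1 + A 1 2 - A 0 2 - A 1 1] : Fin 3 → ℝ)) m
          = (A 0 0 * A 1 1 + A 0 0 * A 2 2 + A 1 1 * A 2 2
          - A 0 1 ^ 2 - A 0 2 ^ 2 - A 1 2 ^ 2
          + 2 * A 0 1 * A 0 2 + 2 * A 0 1 * A 1 2 + 2 * A 0 2 * A 1 2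
          - 2 * A 0 0 * A 1 2 - 2 * A 0 1 * A 2 2 - 2 * A 0 2 * A 1 1) * (Pi.single (0:Fin 3) 1 : Fin 3 → ℝ) m + (A 0 1 * A 2 2 + A 0 2 * A 1 1 + A 1 2 ^ 2
          - A 0 1 * A 1 2 - A 0 2 * A 1 2 - A 1 1 * A 2 2) := by
        intro m
        fin_cases m
        exacts [c0, c1, c2]
      have hdj : 0 < (![A 1 1 + A 2 2 - 2 * A 1 2, A 0 2 + A 1 2 - A 0 1 - A 2 2, A 0 1 + A 1 2 - A 0 2 - A 1 1] : Fin 3 → ℝ) 2 := by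
        simp [Matrix.cons_val_zero, Matrix.cons_val_one, Matrix.head_cons]
        linarith
      exact forward_core A hsymm hpos hq (p := 0) (j := 2)
        (fun μ t ht => hsub 0 2 (by decide) μ t ht)
        (![A 1 1 + A 2 2 - 2 * A 1 2, A 0 2 + A 1 2 - A 0 1 - A 2 2, A 0 1 + A 1 2 - A 0 2 - A 1 1]) (A 0 0 * A 1 1 + A 0 0 * A 2 2 + A 1 1 * A 2 2
          - A 0 1 ^ 2 - A 0 2 ^ 2 - A 1 2 ^ 2
          + 2 * A 0 1 * A 0 2 + 2 * A 0 1 * A 1 2 + 2 * A 0 2 * A 1 2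
          - 2 * A 0 0 * A 1 2 - 2 * A 0 1 * A 2 2 - 2 * A 0 2 * A 1 1)
        (A 0 1 * A 2 2 + A 0 2 * A 1 1 + A 1 2 ^ 2
          - A 0 1 * A 1 2 - A 0 2 * A 1 2 - A 1 1 * A 2 2)
        hQs hsum hAd hdj
    · by_contra hc
      push_neg at hc
      have hsum : (![A 0 2 + A 1 2 - A 0 1 - A 2 2, A 0 0 + A 2 2 - 2 * A 0 2, A 0 1 + A 0 2 - A 1 2 - A 0 0] : Fin 3 → ℝ) 0 + (![A 0 2 + A 1 2 - A 0 1 - A 2 2, A 0 0 + A 2 2 - 2 * A 0 2, A 0 1 + A 0 2 - A 1 2 - A 0 0] : Fin 3 → ℝ) 1 + (![A 0 2 + A 1 2 - A 0 1 - A 2 2, A 0 0 + A 2 2 - 2 * A 0 2, A 0 1 + A 0 2 - A 1 2 - A 0 0] : Fin 3 → ℝ) 2 = 0 := by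
        simp [Matrix.cons_val_zero, Matrix.cons_val_one, Matrix.head_cons]
        ring
      have c0 : (Matrix.mulVec A (![A 0 2 + A 1 2 - A 0 1 - A 2 2, A 0 0 + A 2 2 - 2 * A 0 2, A 0 1 + A 0 2 - A 1 2 - A 0 0] : Fin 3 → ℝ)) 0
          = (A 0 0 * A 1 1 + A 0 0 * A 2 2 + A 1 1 * A 2 2
          - A 0 1 ^ 2 - A 0 2 ^ 2 - A 1 2 ^ 2
          + 2 * A 0 1 * A 0 2 + 2 * A 0 1 * A 1 2 + 2 * A 0 2 * A 1 2
          - 2 * A 0 0 * A 1 2 - 2 * A 0 1 * A 2 2 - 2 * A 0 2 * A 1 1) * (Pi.single (1:Fin 3) 1 : Fin 3 → ℝ) 0 + (A 0 0 * A 1 2 + A 0 1 * A 2 2 + A 0 2 ^ 2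
          - A 0 0 * A 2 2 - A 0 1 * A 0 2 - A 0 2 * A 1 2) := by
        simp [Matrix.mulVec, dotProduct, Fin.sum_univ_three, Pi.single_apply,
          h10, h20, h21]
        ring
      have c1 : (Matrix.mulVec A (![A 0 2 + A 1 2 - A 0 1 - A 2 2, A 0 0 + A 2 2 - 2 * A 0 2, A 0 1 + A 0 2 - A 1 2 - A 0 0] : Fin 3 → ℝ)) 1
          = (A 0 0 * A 1 1 + A 0 0 * A 2 2 + A 1 1 * A 2 2
          - A 0 1 ^ 2 - A 0 2 ^ 2 - A 1 2 ^ 2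
          + 2 * A 0 1 * A 0 2 + 2 * A 0 1 * A 1 2 + 2 * A 0 2 * A 1 2
          - 2 * A 0 0 * A 1 2 - 2 * A 0 1 * A 2 2 - 2 * A 0 2 * A 1 1) * (Pi.single (1:Fin 3) 1 : Fin 3 → ℝ) 1 + (A 0 0 * A 1 2 + A 0 1 * A 2 2 + A 0 2 ^ 2
          - A 0 0 * A 2 2 - A 0 1 * A 0 2 - A 0 2 * A 1 2) := by
        simp [Matrix.mulVec, dotProduct, Fin.sum_univ_three, Pi.single_apply,
          h10, h20, h21]
        ring
      have c2 : (Matrix.mulVec A (![A 0 2 + A 1 2 - A 0 1 - A 2 2, A 0 0 + A 2 2 - 2 * A 0 2, A 0 1 + A 0 2 - A 1 2 - A 0 0] : Fin 3 → ℝ)) 2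
          = (A 0 0 * A 1 1 + A 0 0 * A 2 2 + A 1 1 * A 2 2
          - A 0 1 ^ 2 - A 0 2 ^ 2 - A 1 2 ^ 2
          + 2 * A 0 1 * A 0 2 + 2 * A 0 1 * A 1 2 + 2 * A 0 2 * A 1 2
          - 2 * A 0 0 * A 1 2 - 2 * A 0 1 * A 2 2 - 2 * A 0 2 * A 1 1) * (Pi.single (1:Fin 3) 1 : Fin 3 → ℝ) 2 + (A 0 0 * A 1 2 + A 0 1 * A 2 2 + A 0 2 ^ 2
          - A 0 0 * A 2 2 - A 0 1 * A 0 2 - A 0 2 * A 1 2) := by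
        simp [Matrix.mulVec, dotProduct, Fin.sum_univ_three, Pi.single_apply,
          h10, h20, h21]
        ring
      have hAd : ∀ m, (Matrix.mulVec A (![A 0 2 + A 1 2 - A 0 1 - A 2 2, A 0 0 + A 2 2 - 2 * A 0 2, A 0 1 + A 0 2 - A 1 2 - A 0 0] : Fin 3 → ℝ)) m
          = (A 0 0 * A 1 1 + A 0 0 * A 2 2 + A 1 1 * A 2 2
          - A 0 1 ^ 2 - A 0 2 ^ 2 - A 1 2 ^ 2
          + 2 * A 0 1 * A 0 2 + 2 * A 0 1 * A 1 2 + 2 * A 0 2 * A 1 2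
          - 2 * A 0 0 * A 1 2 - 2 * A 0 1 * A 2 2 - 2 * A 0 2 * A 1 1) * (Pi.single (1:Fin 3) 1 : Fin 3 → ℝ) m + (A 0 0 * A 1 2 + A 0 1 * A 2 2 + A 0 2 ^ 2
          - A 0 0 * A 2 2 - A 0 1 * A 0 2 - A 0 2 * A 1 2) := by
        intro m
        fin_cases m
        exacts [c0, c1, c2]
      have hdj : 0 < (![A 0 2 + A 1 2 - A 0 1 - A 2 2, A 0 0 + A 2 2 - 2 * A 0 2, A 0 1 + A 0 2 - A 1 2 - A 0 0] : Fin 3 → ℝ) 2 := by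
        simp [Matrix.cons_val_zero, Matrix.cons_val_one, Matrix.head_cons]
        linarith
      exact forward_core A hsymm hpos hq (p := 1) (j := 2)
        (fun μ t ht => hsub 1 2 (by decide) μ t ht)
        (![A 0 2 + A 1 2 - A 0 1 - A 2 2, A 0 0 + A 2 2 - 2 * A 0 2, A 0 1 + A 0 2 - A 1 2 - A 0 0]) (A 0 0 * A 1 1 + A 0 0 * A 2 2 + A 1 1 * A 2 2
          - A 0 1 ^ 2 - A 0 2 ^ 2 - A 1 2 ^ 2
          + 2 * A 0 1 * A 0 2 + 2 * A 0 1 * A 1 2 + 2 * A 0 2 * A 1 2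
          - 2 * A 0 0 * A 1 2 - 2 * A 0 1 * A 2 2 - 2 * A 0 2 * A 1 1)
        (A 0 0 * A 1 2 + A 0 1 * A 2 2 + A 0 2 ^ 2
          - A 0 0 * A 2 2 - A 0 1 * A 0 2 - A 0 2 * A 1 2)
        hQs hsum hAd hdj
  · -- the inequalities imply substitutability
    rintro ⟨hI1, hI2, hI3⟩
    intro i j hij μ t ht
    fin_cases i <;> fin_cases j
    · exact absurd rfl hij
    · exact back_core A hsymm hpos (i := 0) (j := 1) (k := 2) (by decide) (by decide) (by decide)
        (by linarith) (by linarith) ht.le (hq μ).1 (hq _).1 (hq μ).2 (hq _).2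
    · exact back_core A hsymm hpos (i := 0) (j := 2) (k := 1) (by decide) (by decide) (by decide)
        (by linarith) (by linarith) ht.le (hq μ).1 (hq _).1 (hq μ).2 (hq _).2
    · exact back_core A hsymm hpos (i := 1) (j := 0) (k := 2) (by decide) (by decide) (by decide)
        (by linarith) (by linarith) ht.le (hq μ).1 (hq _).1 (hq μ).2 (hq _).2
    · exact absurd rfl hij
    · exact back_core A hsymm hpos (i := 1) (j := 2) (k := 0) (by decide) (by decide) (by decide)
        (by linarith) (by linarith) ht.le (hq μ).1 (hq _).1 (hq μ).2 (hq _).2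
    · exact back_core A hsymm hpos (i := 2) (j := 0) (k := 1) (by decide) (by decide) (by decide)
        (by linarith) (by linarith) ht.le (hq μ).1 (hq _).1 (hq μ).2 (hq _).2
    · exact back_core A hsymm hpos (i := 2) (j := 1) (k := 0) (by decide) (by decide) (by decide)
        (by linarith) (by linarith) ht.le (hq μ).1 (hq _).1 (hq μ).2 (hq _).2
    · exact absurd rfl hij
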